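/- A subset h ⊆ g̃ is a 3-dimensional Lie subalgebra with β^U([X,Y]) = 0 for all X,Y ∈ h if and only if h is one of the following: span{X₁+cX₃, T, U} for some c ∈ ℝ; span{X₃, T, U}; span{X₁+bX₂+dT, X₃−(1/b)T, U} for some b ∈ ℝ∖{0} and d ∈ ℝ; or span{X₂+eT, X₃, U} for some e ∈ ℝ. (These are the subalgebras h^c, h^{c=∞}, h^{b,d}, h^e subordinate to the four-dimensional coadjoint orbits of G̃.) -/

import Mathlib

noncomputable section

/-- The underlying space `ℝ⁵` of the Lie algebra `g̃`, with coordinates in the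
basis `X₁, X₂, X₃, T, U`. -/
abbrev G5 : Type := ℝ × ℝ × ℝ × ℝ × ℝ

/-- The bracket of `g̃`. -/
def lb (X Y : G5) : G5 :=
  (0, 0, X.1 * Y.2.1 - X.2.1 * Y.1, 0,
   -(X.1 * Y.2.2.1 - X.2.2.1 * Y.1) - (X.2.1 * Y.2.2.2.1 - X.2.2.2.1 * Y.2.1))

/-- `β^U : g̃ → ℝ` reads off the `U`-coefficient. -/
def βU (X : G5) : ℝ := X.2.2.2.2

def X1v : G5 := (1, 0, 0, 0, 0)
def X2v : G5 := (0, 1, 0, 0, 0)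
def X3v : G5 := (0, 0, 1, 0, 0)
def Tv : G5 := (0, 0, 0, 1, 0)
def Uv : G5 := (0, 0, 0, 0, 1)

lemma lb_add_left (X X' Y : G5) : lb (X + X') Y = lb X Y + lb X' Y := by
  simp [lb, Prod.ext_iff]; constructor <;> ring
lemma lb_add_right (X Y Y' : G5) : lb X (Y + Y') = lb X Y + lb X Y' := by
  simp [lb, Prod.ext_iff]; constructor <;> ring
lemma lb_smul_left (c : ℝ) (X Y : G5) : lb (c • X) Y = c • lb X Y := by
  simp [lb, Prod.ext_iff]; constructor <;> ring
lemma lb_smul_right (c : ℝ) (X Y : G5) : lb X (c • Y) = c • lb X Y := by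
  simp [lb, Prod.ext_iff]; constructor <;> ring
lemma lb_zero_left (Y : G5) : lb 0 Y = 0 := by simp [lb, Prod.ext_iff]
lemma lb_zero_right (X : G5) : lb X 0 = 0 := by simp [lb, Prod.ext_iff]

lemma lb_span_zero {s : Set G5} (H : ∀ a ∈ s, ∀ b ∈ s, lb a b = 0) :
    ∀ X ∈ Submodule.span ℝ s, ∀ Y ∈ Submodule.span ℝ s, lb X Y = 0 := by
  intro X hX
  induction hX using Submodule.span_induction with
  | mem x hx =>
    intro Y hY
    induction hY using Submodule.span_induction with
    | mem y hy => exact H x hx y hy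
    | zero => exact lb_zero_right x
    | add y z _ _ hy hz => rw [lb_add_right, hy, hz, add_zero]
    | smul c y _ hy => rw [lb_smul_right, hy, smul_zero]
  | zero => intro Y hY; exact lb_zero_left Y
  | add x y _ _ hx hy => intro Y hY; rw [lb_add_left, hx Y hY, hy Y hY, add_zero]
  | smul c x _ hx => intro Y hY; rw [lb_smul_left, hx Y hY, smul_zero]

lemma mem_span_triple {v1 v2 v3 x : G5} (c1 c2 c3 : ℝ)
    (hx : x = c1 • v1 + c2 • v2 + c3 • v3) :
    x ∈ Submodule.span ℝ ({v1, v2, v3} : Set G5) := by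
  subst hx
  exact add_mem (add_mem
    (Submodule.smul_mem _ _ (Submodule.subset_span (by simp)))
    (Submodule.smul_mem _ _ (Submodule.subset_span (by simp))))
    (Submodule.smul_mem _ _ (Submodule.subset_span (by simp)))

lemma finrank_span_triple_le (v1 v2 v3 : G5) :
    Module.finrank ℝ (Submodule.span ℝ ({v1, v2, v3} : Set G5)) ≤ 3 := by
  classical
  refine le_trans (finrank_span_le_card _) ?_
  simp only [Set.toFinset_insert, Set.toFinset_singleton]
  refine le_trans (Finset.card_insert_le _ _) (Nat.succ_le_succ ?_)
  exact le_trans (Finset.card_insert_le _ _) (Nat.succ_le_succ (by simp))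

lemma finrank_span_triple_eq {v1 v2 v3 : G5} (h : LinearIndependent ℝ ![v1, v2, v3]) :
    Module.finrank ℝ (Submodule.span ℝ ({v1, v2, v3} : Set G5)) = 3 := by
  have hr : Set.range ![v1, v2, v3] = {v1, v2, v3} := by
    ext x
    simp only [Set.mem_range, Set.mem_insert_iff, Set.mem_singleton_iff]
    constructor
    · rintro ⟨i, rfl⟩; fin_cases i <;> simp
    · rintro (rfl | rfl | rfl)
      exacts [⟨0, rfl⟩, ⟨1, rfl⟩, ⟨2, rfl⟩]
  rw [← hr, finrank_span_eq_card h]; simp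

/-- Verify the three conditions for a span of three vectors whose pairwise
brackets all vanish and which are linearly independent. -/
lemma backward_case {v1 v2 v3 : G5}
    (hind : LinearIndependent ℝ ![v1, v2, v3])
    (hbr : ∀ a ∈ ({v1, v2, v3} : Set G5), ∀ b ∈ ({v1, v2, v3} : Set G5), lb a b = 0) :
    Module.finrank ℝ (Submodule.span ℝ ({v1, v2, v3} : Set G5)) = 3 ∧
      (∀ X ∈ Submodule.span ℝ ({v1, v2, v3} : Set G5),
        ∀ Y ∈ Submodule.span ℝ ({v1, v2, v3} : Set G5),
          lb X Y ∈ Submodule.span ℝ ({v1, v2, v3} : Set G5)) ∧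
      (∀ X ∈ Submodule.span ℝ ({v1, v2, v3} : Set G5),
        ∀ Y ∈ Submodule.span ℝ ({v1, v2, v3} : Set G5), βU (lb X Y) = 0) := by
  refine ⟨finrank_span_triple_eq hind, ?_, ?_⟩
  · intro X hX Y hY
    rw [lb_span_zero hbr X hX Y hY]
    exact zero_mem _
  · intro X hX Y hY
    rw [lb_span_zero hbr X hX Y hY]
    rfl

/-- A subspace `h ⊆ g̃` is a 3-dimensional Lie subalgebra with `β^U([X,Y]) = 0`
for all `X,Y ∈ h` if and only if it is one of:
`span{X₁+cX₃, T, U}` (`c ∈ ℝ`); `span{X₃, T, U}`;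
`span{X₁+bX₂+dT, X₃−(1/b)T, U}` (`b ≠ 0`, `d ∈ ℝ`); or
`span{X₂+eT, X₃, U}` (`e ∈ ℝ`). -/
theorem stmt5 (h : Submodule ℝ G5) :
    (Module.finrank ℝ h = 3 ∧ (∀ X ∈ h, ∀ Y ∈ h, lb X Y ∈ h) ∧
      (∀ X ∈ h, ∀ Y ∈ h, βU (lb X Y) = 0)) ↔
    ((∃ c : ℝ, h = Submodule.span ℝ {X1v + c • X3v, Tv, Uv}) ∨
      h = Submodule.span ℝ {X3v, Tv, Uv} ∨
      (∃ b d : ℝ, b ≠ 0 ∧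
        h = Submodule.span ℝ {X1v + b • X2v + d • Tv, X3v - (1 / b) • Tv, Uv}) ∨
      (∃ e : ℝ, h = Submodule.span ℝ {X2v + e • Tv, X3v, Uv})) := by
  constructor
  · rintro ⟨hdim, hcl, hiso⟩
    by_cases hC : ∃ X ∈ h, ∃ Y ∈ h, X.1 * Y.2.1 - X.2.1 * Y.1 ≠ 0
    · -- impossible case: projection to (x1,x2) has rank 2
      exfalso
      obtain ⟨X, hX, Y, hY, hδ⟩ := hC
      have hmem := hcl X hX Y hY
      have hu := hiso X hX Y hY
      have h3 : X3v ∈ h := by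
        have hu' : -(X.1 * Y.2.2.1 - X.2.2.1 * Y.1) -
            (X.2.1 * Y.2.2.2.1 - X.2.2.2.1 * Y.2.1) = 0 := hu
        have hform : lb X Y = (X.1 * Y.2.1 - X.2.1 * Y.1) • X3v := by
          simp only [lb, X3v, Prod.ext_iff, Prod.smul_mk, smul_eq_mul]
          exact ⟨by simp, by simp, by ring, by simp, by rw [hu']; ring⟩
        have h3' : (X.1 * Y.2.1 - X.2.1 * Y.1)⁻¹ • lb X Y = X3v := by
          rw [hform, smul_smul, inv_mul_cancel₀ hδ, one_smul]
        rw [← h3']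
        exact Submodule.smul_mem _ _ hmem
      have e1 : X.1 = 0 := by
        have := hiso X hX X3v h3
        simp only [βU, lb, X3v] at this
        linarith
      have e2 : Y.1 = 0 := by
        have := hiso Y hY X3v h3
        simp only [βU, lb, X3v] at this
        linarith
      rw [e1, e2] at hδ
      simp at hδ
    · push_neg at hC
      by_cases hA : ∀ Z ∈ h, Z.1 = 0 ∧ Z.2.1 = 0
      · -- h = span {X3, T, U}
        right; left
        refine Submodule.eq_of_le_of_finrank_le ?_ (by rw [hdim]; exact finrank_span_triple_le _ _ _)
        intro Z hZ
        obtain ⟨h1, h2⟩ := hA Z hZ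
        exact mem_span_triple Z.2.2.1 Z.2.2.2.1 Z.2.2.2.2
          (by simp [X3v, Tv, Uv, Prod.ext_iff, h1, h2])
      · push_neg at hA
        obtain ⟨Z, hZ, hZ'⟩ := hA
        by_cases h1 : Z.1 = 0
        · -- Z.2.1 ≠ 0 : case span {X2 + eT, X3, U}
          have h2 : Z.2.1 ≠ 0 := fun h2 => hZ' h1 h2
          right; right; right
          refine ⟨Z.2.2.2.1 / Z.2.1, ?_⟩
          refine Submodule.eq_of_le_of_finrank_le ?_ (by rw [hdim]; exact finrank_span_triple_le _ _ _)
          intro Y hY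
          have hy1 : Y.1 = 0 := by
            have := hC Z hZ Y hY
            rw [h1] at this
            have : Z.2.1 * Y.1 = 0 := by linarith
            exact (mul_eq_zero.mp this).resolve_left h2
          have hy4 : Y.2.2.2.1 = Z.2.2.2.1 / Z.2.1 * Y.2.1 := by
            have hq := hiso Z hZ Y hY
            simp only [βU, lb] at hq
            field_simp
            rw [h1] at hq; rw [hy1] at hq
            nlinarith [hq]
          exact mem_span_triple Y.2.1 Y.2.2.1 Y.2.2.2.2
            (by simp [X2v, X3v, Tv, Uv, Prod.ext_iff, hy1]; rw [hy4]; ring)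
        · -- Z.1 ≠ 0
          have hb := hC Z hZ
          have hq := hiso Z hZ
          by_cases h2 : Z.2.1 = 0
          · -- case span {X1 + cX3, T, U} with c = Z.2.2.1 / Z.1
            left
            refine ⟨Z.2.2.1 / Z.1, ?_⟩
            refine Submodule.eq_of_le_of_finrank_le ?_ (by rw [hdim]; exact finrank_span_triple_le _ _ _)
            intro Y hY
            have hy2 : Y.2.1 = 0 := by
              have := hb Y hY
              rw [h2] at this
              have : Z.1 * Y.2.1 = 0 := by linarith
              exact (mul_eq_zero.mp this).resolve_left h1
            have hy3 : Y.2.2.1 = Z.2.2.1 / Z.1 * Y.1 := by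
              have hq' := hq Y hY
              simp only [βU, lb] at hq'
              rw [h2, hy2] at hq'
              field_simp
              nlinarith [hq']
            exact mem_span_triple Y.1 Y.2.2.2.1 Y.2.2.2.2
              (by simp [X1v, X3v, Tv, Uv, Prod.ext_iff, hy2]; rw [hy3]; ring)
          · -- case span {X1 + bX2 + dT, X3 - (1/b)T, U}
            right; right; left
            set b := Z.2.1 / Z.1 with hbdef
            set α := Z.2.2.1 / Z.1 with hadef
            set d := Z.2.2.2.1 / Z.1 with hddef
            have hbne : b ≠ 0 := div_ne_zero h2 h1
            refine ⟨b, α / b + d, hbne, ?_⟩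
            refine Submodule.eq_of_le_of_finrank_le ?_ (by rw [hdim]; exact finrank_span_triple_le _ _ _)
            intro Y hY
            have hy2 : Y.2.1 = b * Y.1 := by
              have := hb Y hY
              rw [hbdef]
              field_simp
              nlinarith [this]
            have hy3 : Y.2.2.1 = (α + d * b) * Y.1 - b * Y.2.2.2.1 := by
              have hq' := hq Y hY
              simp only [βU, lb] at hq'
              rw [hbdef, hadef, hddef]
              have hy2' : Z.1 * Y.2.1 = Z.2.1 * Y.1 := by nlinarith [hb Y hY]
              field_simp
              linear_combination -(Z.1) * hq' + Z.2.2.2.1 * hy2'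
            refine mem_span_triple Y.1 ((α + d * b) * Y.1 - b * Y.2.2.2.1) Y.2.2.2.2 ?_
            simp only [X1v, X2v, X3v, Tv, Uv, Prod.ext_iff, Prod.smul_mk, Prod.mk_add_mk,
              Prod.mk_sub_mk, smul_eq_mul]
            refine ⟨by ring, ?_, ?_, ?_, by ring⟩
            · rw [hy2]; ring
            · rw [hy3]; ring
            · field_simp
              ring
  · rintro (⟨c, rfl⟩ | rfl | ⟨b, d, hb, rfl⟩ | ⟨e, rfl⟩)
    · have e1 : X1v + c • X3v = ((1, 0, c, 0, 0) : G5) := by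
        simp [X1v, X3v, Prod.ext_iff]
      rw [e1]
      refine backward_case ?_ ?_
      · rw [Fintype.linearIndependent_iff]
        intro g hg i
        simp [Fin.sum_univ_three, Tv, Uv, Prod.ext_iff] at hg
        fin_cases i <;> simp_all
      · intro a ha b hb
        simp only [Set.mem_insert_iff, Set.mem_singleton_iff] at ha hb
        rcases ha with rfl | rfl | rfl <;> rcases hb with rfl | rfl | rfl <;>
          simp [lb, Tv, Uv, Prod.ext_iff]
    · refine backward_case ?_ ?_
      · rw [Fintype.linearIndependent_iff]
        intro g hg i
        simp [Fin.sum_univ_three, X3v, Tv, Uv, Prod.ext_iff] at hg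
        fin_cases i <;> simp_all
      · intro a ha b hb
        simp only [Set.mem_insert_iff, Set.mem_singleton_iff] at ha hb
        rcases ha with rfl | rfl | rfl <;> rcases hb with rfl | rfl | rfl <;>
          simp [lb, X3v, Tv, Uv, Prod.ext_iff]
    · have e1 : X1v + b • X2v + d • Tv = ((1, b, 0, d, 0) : G5) := by
        simp [X1v, X2v, Tv, Prod.ext_iff]
      have e2 : X3v - (1 / b) • Tv = ((0, 0, 1, -(1 / b), 0) : G5) := by
        simp [X3v, Tv, Prod.ext_iff]
      rw [e1, e2]
      refine backward_case ?_ ?_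
      · rw [Fintype.linearIndependent_iff]
        intro g hg i
        simp [Fin.sum_univ_three, Uv, Prod.ext_iff] at hg
        fin_cases i <;> simp_all
      · intro a ha b' hb'
        simp only [Set.mem_insert_iff, Set.mem_singleton_iff] at ha hb'
        rcases ha with rfl | rfl | rfl <;> rcases hb' with rfl | rfl | rfl <;>
          simp [lb, Uv, Prod.ext_iff] <;> (try field_simp) <;> ring
    · have e1 : X2v + e • Tv = ((0, 1, 0, e, 0) : G5) := by
        simp [X2v, Tv, Prod.ext_iff]
      rw [e1]
      refine backward_case ?_ ?_
      · rw [Fintype.linearIndependent_iff]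
        intro g hg i
        simp [Fin.sum_univ_three, X3v, Uv, Prod.ext_iff] at hg
        fin_cases i <;> simp_all
      · intro a ha b hb
        simp only [Set.mem_insert_iff, Set.mem_singleton_iff] at ha hb
        rcases ha with rfl | rfl | rfl <;> rcases hb with rfl | rfl | rfl <;>
          simp [lb, X3v, Uv, Prod.ext_iff]

end
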